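/- On the elliptic curve $y^2 = x(x^2 - e^2(e-1)x + e^3(2e+1))$ over $\mathbb{Q}(e)$, the point $(0,0)$ has order $2$ and the point $(e^3, e^3 + e^4)$ lies on the curve and has infinite order. -/

import Mathlib

noncomputable section

open Polynomial WeierstrassCurve WeierstrassCurve.Affine WeierstrassCurve.Affine.Point

open Classical

abbrev K := RatFunc ℚ

/-- The elliptic curve `y² = x(x² - e²(e-1)x + e³(2e+1))` over `ℚ(e)`. -/
def W18 : WeierstrassCurve.Affine (RatFunc ℚ) :=
  { a₁ := 0, a₂ := -(RatFunc.X ^ 2 * (RatFunc.X - 1)), a₃ := 0,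
    a₄ := RatFunc.X ^ 3 * (2 * RatFunc.X + 1), a₆ := 0 }

lemma poly_of_root (r : K) (c₁ c₀ : ℚ[X])
    (h : r ^ 2 + algebraMap ℚ[X] K c₁ * r + algebraMap ℚ[X] K c₀ = 0) :
    ∃ p : ℚ[X], r = algebraMap ℚ[X] K p := by
  have hint : IsIntegral ℚ[X] r := by
    refine ⟨Polynomial.X ^ 2 + Polynomial.C c₁ * Polynomial.X + Polynomial.C c₀, ?_, ?_⟩
    · have h2 : (Polynomial.C c₁ * Polynomial.X + Polynomial.C c₀ : ℚ[X][X]).degree < 2 := by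
        apply lt_of_le_of_lt (Polynomial.degree_add_le _ _)
        simp only [max_lt_iff]
        constructor
        · apply lt_of_le_of_lt (Polynomial.degree_mul_le _ _)
          have := Polynomial.degree_C_le (a := c₁) (R := ℚ[X])
          have hX := Polynomial.degree_X (R := ℚ[X])
          calc (Polynomial.C c₁).degree + (Polynomial.X : ℚ[X][X]).degree ≤ 0 + 1 := by
                exact add_le_add this (le_of_eq hX)
            _ < 2 := by norm_num
        · exact lt_of_le_of_lt Polynomial.degree_C_le (by norm_num)
      simpa [add_assoc] using Polynomial.monic_X_pow_add (n := 2) h2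
    · simp only [Polynomial.eval₂_add, Polynomial.eval₂_mul, Polynomial.eval₂_pow,
        Polynomial.eval₂_X, Polynomial.eval₂_C]
      exact h
  obtain ⟨p, hp⟩ := (IsIntegrallyClosed.isIntegral_iff (R := ℚ[X]) (K := K)).mp hint
  exact ⟨p, hp.symm⟩

-- divide out an X from p when X ∣ p^2 etc
lemma Xdvd_of_sq {p : ℚ[X]} (h : (Polynomial.X : ℚ[X]) ∣ p ^ 2) : (Polynomial.X : ℚ[X]) ∣ p := by
  have := (Polynomial.prime_X (R := ℚ)).dvd_of_dvd_pow h
  exact this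

lemma not_sq_poly1 : ¬ ∃ p : ℚ[X], p ^ 2 = Polynomial.X ^ 3 := by
  rintro ⟨p, hp⟩
  obtain ⟨p₁, rfl⟩ := Xdvd_of_sq (p := p) ⟨Polynomial.X ^ 2, by rw [hp]; ring⟩
  have h1 : p₁ ^ 2 = Polynomial.X := by
    have hX : (Polynomial.X : ℚ[X]) ^ 2 ≠ 0 := pow_ne_zero _ Polynomial.X_ne_zero
    apply mul_left_cancel₀ hX
    linear_combination hp
  obtain ⟨p₂, rfl⟩ := Xdvd_of_sq (p := p₁) ⟨1, by rw [h1]; ring⟩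
  have h2 : Polynomial.X * p₂ ^ 2 = 1 := by
    have hX : (Polynomial.X : ℚ[X]) ≠ 0 := Polynomial.X_ne_zero
    apply mul_left_cancel₀ hX
    linear_combination h1
  have := congrArg (Polynomial.eval 0) h2
  simp at this

lemma not_sq_poly2 : ¬ ∃ p : ℚ[X], p ^ 2 = 2 * Polynomial.X + 1 := by
  rintro ⟨p, hp⟩
  have hp0 : p ≠ 0 := by
    intro h; rw [h] at hp
    have := congrArg (Polynomial.eval 0) hp
    simp at this
  have hd : (p ^ 2).natDegree = 2 * p.natDegree := by
    simp [Polynomial.natDegree_pow]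
  have hd2 : (2 * Polynomial.X + 1 : ℚ[X]).natDegree = 1 := by
    have : (2 * Polynomial.X + 1 : ℚ[X]) = Polynomial.C 2 * Polynomial.X + Polynomial.C 1 := by
      rw [map_ofNat, map_one]
    rw [this, Polynomial.natDegree_linear (by norm_num)]
  rw [hp, hd2] at hd
  omega

lemma not_sq_poly3 : ¬ ∃ p : ℚ[X], p ^ 2 = Polynomial.X ^ 3 * (2 * Polynomial.X + 1) := by
  rintro ⟨p, hp⟩
  obtain ⟨p₁, rfl⟩ := Xdvd_of_sq (p := p) ⟨Polynomial.X ^ 2 * (2 * Polynomial.X + 1), by rw [hp]; ring⟩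
  have h1 : p₁ ^ 2 = Polynomial.X * (2 * Polynomial.X + 1) := by
    apply mul_left_cancel₀ (pow_ne_zero 2 (Polynomial.X_ne_zero (R := ℚ)))
    linear_combination hp
  obtain ⟨p₂, rfl⟩ := Xdvd_of_sq (p := p₁) ⟨2 * Polynomial.X + 1, by rw [h1]⟩
  have h2 : Polynomial.X * p₂ ^ 2 = 2 * Polynomial.X + 1 := by
    apply mul_left_cancel₀ (Polynomial.X_ne_zero (R := ℚ))
    linear_combination h1
  have := congrArg (Polynomial.eval 0) h2
  simp at this

lemma not_root_quad : ¬ ∃ p : ℚ[X],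
    p ^ 2 = Polynomial.X ^ 2 * (Polynomial.X - 1) * p - Polynomial.X ^ 3 * (2 * Polynomial.X + 1) := by
  rintro ⟨p, hp⟩
  obtain ⟨p₁, rfl⟩ := Xdvd_of_sq (p := p)
    ⟨Polynomial.X * (Polynomial.X - 1) * p - Polynomial.X ^ 2 * (2 * Polynomial.X + 1), by
      rw [hp]; ring⟩
  have h1 : p₁ ^ 2 = Polynomial.X * (Polynomial.X - 1) * p₁ - Polynomial.X * (2 * Polynomial.X + 1) := by
    apply mul_left_cancel₀ (pow_ne_zero 2 (Polynomial.X_ne_zero (R := ℚ)))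
    linear_combination hp
  obtain ⟨p₂, rfl⟩ := Xdvd_of_sq (p := p₁)
    ⟨(Polynomial.X - 1) * p₁ - (2 * Polynomial.X + 1), by rw [h1]; ring⟩
  have h2 : Polynomial.X * p₂ ^ 2 =
      Polynomial.X * (Polynomial.X - 1) * p₂ - (2 * Polynomial.X + 1) := by
    apply mul_left_cancel₀ (Polynomial.X_ne_zero (R := ℚ))
    linear_combination h1
  have := congrArg (Polynomial.eval 0) h2
  simp at this







lemma map_eq {p q : ℚ[X]} (h : algebraMap ℚ[X] K p = algebraMap ℚ[X] K q) : p = q :=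
  RatFunc.algebraMap_injective ℚ h

lemma nsq1 : ¬ ∃ r : K, r ^ 2 = RatFunc.X ^ 3 := by
  rintro ⟨r, hr⟩
  obtain ⟨p, rfl⟩ := poly_of_root r 0 (-(Polynomial.X ^ 3)) (by
    simp only [_root_.map_zero, map_neg, map_pow, RatFunc.algebraMap_X, zero_mul]
    linear_combination hr)
  exact not_sq_poly1 ⟨p, map_eq (by simpa only [map_pow, RatFunc.algebraMap_X] using hr)⟩

lemma nsq2 : ¬ ∃ r : K, r ^ 2 = 2 * RatFunc.X + 1 := by
  rintro ⟨r, hr⟩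
  obtain ⟨p, rfl⟩ := poly_of_root r 0 (-(2 * Polynomial.X + 1)) (by
    simp only [_root_.map_zero, map_neg, map_add, map_mul, map_one, map_ofNat, RatFunc.algebraMap_X,
      zero_mul]
    linear_combination hr)
  refine not_sq_poly2 ⟨p, map_eq ?_⟩
  simpa only [map_pow, map_add, map_mul, map_one, map_ofNat, RatFunc.algebraMap_X] using hr

lemma nsq3 : ¬ ∃ r : K, r ^ 2 = RatFunc.X ^ 3 * (2 * RatFunc.X + 1) := by
  rintro ⟨r, hr⟩
  obtain ⟨p, rfl⟩ := poly_of_root r 0 (-(Polynomial.X ^ 3 * (2 * Polynomial.X + 1))) (by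
    simp only [_root_.map_zero, map_neg, map_add, map_mul, map_one, map_ofNat, map_pow,
      RatFunc.algebraMap_X, zero_mul]
    linear_combination hr)
  refine not_sq_poly3 ⟨p, map_eq ?_⟩
  simpa only [map_pow, map_add, map_mul, map_one, map_ofNat, RatFunc.algebraMap_X] using hr

lemma nquad : ¬ ∃ r : K,
    r ^ 2 = RatFunc.X ^ 2 * (RatFunc.X - 1) * r - RatFunc.X ^ 3 * (2 * RatFunc.X + 1) := by
  rintro ⟨r, hr⟩
  obtain ⟨p, rfl⟩ := poly_of_root r (-(Polynomial.X ^ 2 * (Polynomial.X - 1)))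
    (Polynomial.X ^ 3 * (2 * Polynomial.X + 1)) (by
    simp only [map_neg, map_add, map_sub, map_mul, map_one, map_ofNat, map_pow,
      RatFunc.algebraMap_X]
    linear_combination hr)
  refine not_root_quad ⟨p, map_eq ?_⟩
  simpa only [map_pow, map_add, map_sub, map_mul, map_one, map_ofNat, RatFunc.algebraMap_X] using hr



lemma tX_ne : (RatFunc.X : K) ≠ 0 := RatFunc.X_ne_zero

lemma poly_ratfunc_ne {p : ℚ[X]} (h : Polynomial.eval 0 p ≠ 0) :
    algebraMap ℚ[X] K p ≠ 0 := by
  intro h0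
  apply h
  have : p = 0 := RatFunc.algebraMap_injective ℚ (by simpa using h0)
  simp [this]

lemma t2X1_ne : (2 * RatFunc.X + 1 : K) ≠ 0 := by
  have := poly_ratfunc_ne (p := 2 * Polynomial.X + 1) (by simp)
  simpa only [map_add, map_mul, map_ofNat, map_one, RatFunc.algebraMap_X] using this

lemma tX1_ne : (1 + RatFunc.X : K) ≠ 0 := by
  have := poly_ratfunc_ne (p := 1 + Polynomial.X) (by simp)
  simpa only [map_add, map_one, RatFunc.algebraMap_X] using this

lemma hW0 : W18.Nonsingular 0 0 := by
  rw [WeierstrassCurve.Affine.nonsingular_iff, WeierstrassCurve.Affine.equation_iff]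
  constructor
  · simp [W18]
  · left
    show (0 : K) * 0 ≠ 3 * 0 ^ 2 + 2 * W18.a₂ * 0 + W18.a₄
    simpa [W18] using mul_ne_zero (pow_ne_zero 3 tX_ne) t2X1_ne

lemma hWP : W18.Nonsingular (RatFunc.X ^ 3) (RatFunc.X ^ 3 + RatFunc.X ^ 4) := by
  rw [WeierstrassCurve.Affine.nonsingular_iff, WeierstrassCurve.Affine.equation_iff]
  constructor
  · show _ = _
    simp only [W18]
    ring
  · right
    intro h
    have h2 : (2 : K) * (RatFunc.X ^ 3 * (1 + RatFunc.X)) = 0 := by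
      show (2 : K) * _ = 0
      simp only [W18] at h
      linear_combination h
    rcases mul_eq_zero.mp h2 with h | h
    · exact (poly_ratfunc_ne (p := 2) (by norm_num)) (by rw [map_ofNat]; exact h)
    · exact (mul_ne_zero (pow_ne_zero 3 tX_ne) tX1_ne) h

lemma negY_eq (x y : K) : W18.negY x y = -y := by simp [WeierstrassCurve.Affine.negY, W18]

lemma B_def : W18.a₄ = RatFunc.X ^ 3 * (2 * RatFunc.X + 1) := rfl
lemma a1_def : W18.a₁ = 0 := rfl
lemma a2_def : W18.a₂ = -(RatFunc.X ^ 2 * (RatFunc.X - 1)) := rfl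
lemma a3_def : W18.a₃ = 0 := rfl
lemma a6_def : W18.a₆ = 0 := rfl
lemma two_ne : (2 : K) ≠ 0 := fun h =>
  (poly_ratfunc_ne (p := 2) (by norm_num)) (by rw [map_ofNat]; exact h)




-- T + T = 0
lemma hTT : (Point.some _ _ hW0 : W18.Point) + Point.some _ _ hW0 = 0 :=
  WeierstrassCurve.Affine.Point.add_of_Y_eq rfl (by rw [negY_eq]; ring)

-- classification of 2-torsion
lemma two_torsion {x y : K} (h : W18.Nonsingular x y)
    (h2 : (Point.some _ _ h : W18.Point) + Point.some _ _ h = 0) : x = 0 ∧ y = 0 := by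
  by_cases hy : y = W18.negY x y
  · have hy0 : y = 0 := by
      rw [negY_eq] at hy
      have h2y : (2 : K) * y = 0 := by linear_combination hy
      rcases mul_eq_zero.mp h2y with h | h
      · exact absurd h two_ne
      · exact h
    subst hy0
    refine ⟨?_, rfl⟩
    have heq := ((WeierstrassCurve.Affine.equation_iff _ _).mp h.1)
    rw [a1_def, a3_def, a6_def] at heq
    by_contra hx
    apply nquad
    refine ⟨x, ?_⟩
    have : x * (x ^ 2 + W18.a₂ * x + W18.a₄) = 0 := by linear_combination -heq
    have h3 : x ^ 2 + W18.a₂ * x + W18.a₄ = 0 := by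
      rcases mul_eq_zero.mp this with h | h
      · exact absurd h hx
      · exact h
    show x ^ 2 = _
    have ha2 : W18.a₂ = -(RatFunc.X ^ 2 * (RatFunc.X - 1)) := rfl
    rw [ha2, B_def] at h3
    linear_combination h3
  · rw [WeierstrassCurve.Affine.Point.add_of_Y_ne hy] at h2
    exact absurd h2 (WeierstrassCurve.Affine.Point.some_ne_zero _)

lemma square_of_double (Q : W18.Point) {x y : K} (h : W18.Nonsingular x y)
    (hQ : 2 • Q = Point.some _ _ h) :
    ∃ u v : K, v ≠ 0 ∧ v ^ 2 = u ^ 3 + W18.a₂ * u ^ 2 + W18.a₄ * u ∧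
      x = ((u ^ 2 - W18.a₄) / (2 * v)) ^ 2 := by
  rw [two_nsmul] at hQ
  induction Q with
  | zero =>
    exact absurd hQ.symm (WeierstrassCurve.Affine.Point.some_ne_zero h)
  | @some x₁ y₁ h₁ =>
    by_cases hy : y₁ = W18.negY x₁ y₁
    · rw [WeierstrassCurve.Affine.Point.add_of_Y_eq rfl hy] at hQ
      exact absurd hQ.symm (WeierstrassCurve.Affine.Point.some_ne_zero h)
    · rw [WeierstrassCurve.Affine.Point.add_self_of_Y_ne hy] at hQ
      rw [WeierstrassCurve.Affine.Point.some.injEq] at hQ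
      obtain ⟨hx, -, -⟩ := hQ
      have hy1 : y₁ ≠ 0 := by
        intro h0
        apply hy
        simp [negY_eq, h0, a1_def, a3_def]
      have h2y : (2 : K) * y₁ ≠ 0 := mul_ne_zero two_ne hy1
      have heq : y₁ ^ 2 = x₁ ^ 3 + W18.a₂ * x₁ ^ 2 + W18.a₄ * x₁ := by
        have := (WeierstrassCurve.Affine.equation_iff _ _).mp h₁.1
        rw [a1_def, a3_def, a6_def] at this
        linear_combination this
      refine ⟨x₁, y₁, hy1, heq, ?_⟩
      rw [← hx]
      have hs : W18.slope x₁ x₁ y₁ y₁ = (3 * x₁ ^ 2 + 2 * W18.a₂ * x₁ + W18.a₄) / (2 * y₁) := by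
        rw [WeierstrassCurve.Affine.slope_of_Y_ne rfl hy, negY_eq, a1_def]
        congr 1
        · ring
        · ring
      rw [WeierstrassCurve.Affine.addX, hs, a1_def]
      field_simp
      ring_nf
      linear_combination (-4 * (2 * x₁ + W18.a₂)) * heq




lemma hx3ne : (RatFunc.X ^ 3 : K) ≠ 0 := pow_ne_zero 3 tX_ne

lemma hxPT : W18.addX (RatFunc.X ^ 3) 0
    (W18.slope (RatFunc.X ^ 3) 0 (RatFunc.X ^ 3 + RatFunc.X ^ 4) 0) = 2 * RatFunc.X + 1 := by
  have hsl : W18.slope (RatFunc.X ^ 3) 0 (RatFunc.X ^ 3 + RatFunc.X ^ 4) 0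
      = 1 + RatFunc.X := by
    rw [WeierstrassCurve.Affine.slope_of_X_ne hx3ne, sub_zero, sub_zero, div_eq_iff hx3ne]
    ring
  rw [hsl, WeierstrassCurve.Affine.addX, a1_def, a2_def]
  ring



open Classical in
/-- `(0,0)` has order 2 and `(e³, e³ + e⁴)` lies on the curve and has infinite order. -/
theorem stmt18 :
    ∃ h₀ : W18.Nonsingular 0 0,
      ∃ hP : W18.Nonsingular (RatFunc.X ^ 3) (RatFunc.X ^ 3 + RatFunc.X ^ 4),
      addOrderOf (WeierstrassCurve.Affine.Point.some _ _ h₀) = 2 ∧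
      ¬ IsOfFinAddOrder (WeierstrassCurve.Affine.Point.some _ _ hP) := by
  haveI : Fact (Nat.Prime 2) := ⟨by norm_num⟩
  refine ⟨hW0, hWP, ?_, ?_⟩
  · exact addOrderOf_eq_prime (by rw [two_nsmul]; exact hTT)
      (WeierstrassCurve.Affine.Point.some_ne_zero hW0)
  · intro hfin
    set P : W18.Point := Point.some _ _ hWP with hPdef
    set T : W18.Point := Point.some _ _ hW0 with hTdef
    have h2T : (2 : ℕ) • T = 0 := by rw [two_nsmul]; exact hTT
    -- helper for points of odd order
    have odd_case : ∀ (Q : W18.Point) {x y : K} (h : W18.Nonsingular x y),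
        Q = Point.some _ _ h → Odd (addOrderOf Q) →
        ∃ u v : K, v ≠ 0 ∧ v ^ 2 = u ^ 3 + W18.a₂ * u ^ 2 + W18.a₄ * u ∧
          x = ((u ^ 2 - W18.a₄) / (2 * v)) ^ 2 := by
      intro Q x y h hQeq hodd
      obtain ⟨k, hk⟩ := hodd
      refine square_of_double ((k + 1) • Q) h ?_
      have h1 : (2 : ℕ) • ((k + 1) • Q) = (2 * (k + 1)) • Q := by
        rw [mul_comm, mul_nsmul]
      rw [h1, show 2 * (k + 1) = addOrderOf Q + 1 by omega, add_nsmul,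
        addOrderOf_nsmul_eq_zero, one_nsmul, zero_add, hQeq]
    have hn : 0 < addOrderOf P := hfin.addOrderOf_pos
    rcases Nat.even_or_odd (addOrderOf P) with he | ho
    · -- even order
      obtain ⟨m, hm⟩ := he
      have hmpos : 0 < m := by omega
      have h2Q : (2 : ℕ) • (m • P) = 0 := by
        rw [← mul_nsmul, show m * 2 = addOrderOf P by omega, addOrderOf_nsmul_eq_zero]
      have hQ0 : m • P ≠ 0 := by
        intro h0
        have hdvd := addOrderOf_dvd_of_nsmul_eq_zero h0
        have := Nat.le_of_dvd hmpos hdvd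
        omega
      obtain ⟨xq, yq, hq, hQeq⟩ : ∃ (xq : K) (yq : K) (hq : W18.Nonsingular xq yq),
          m • P = Point.some _ _ hq := by
        cases hQQ : (m • P) with
        | zero => exact absurd hQQ hQ0
        | @some xq yq hq => exact ⟨xq, yq, hq, rfl⟩
      rw [hQeq, two_nsmul] at h2Q
      obtain ⟨hxq, hyq⟩ := two_torsion hq h2Q
      subst hxq; subst hyq
      have hQT : m • P = T := hQeq
      rcases Nat.even_or_odd m with hme | hmo
      · -- m even: T is twice a point
        obtain ⟨l, hl⟩ := hme
        have h2l : (2 : ℕ) • (l • P) = T := by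
          rw [← mul_nsmul, show l * 2 = m by omega, hQT]
        obtain ⟨u, v, hv, hev, hx0⟩ := square_of_double (l • P) hW0 h2l
        have hs0 : (u ^ 2 - W18.a₄) / (2 * v) = 0 := by
          have := hx0.symm
          exact pow_eq_zero_iff (n := 2) (by norm_num) |>.mp this
        have hu : u ^ 2 = W18.a₄ := by
          rcases div_eq_zero_iff.mp hs0 with h | h
          · linear_combination h
          · exact absurd h (mul_ne_zero two_ne hv)
        rw [B_def] at hu
        exact nsq3 ⟨u, hu⟩
      · -- m odd
        have hmT : m • T = T := by
          obtain ⟨j, hj⟩ := hmo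
          rw [hj, add_nsmul, one_nsmul, mul_nsmul, h2T, nsmul_zero, zero_add]
        have hPT : P + T = Point.some _ _ (WeierstrassCurve.Affine.nonsingular_add hWP hW0
            (fun hh => absurd hh.1 hx3ne)) :=
          WeierstrassCurve.Affine.Point.add_of_X_ne hx3ne
        have hP'0 : m • (P + T) = 0 := by
          rw [nsmul_add, hQT, hmT]; exact hTT
        have hkdvd := addOrderOf_dvd_of_nsmul_eq_zero hP'0
        have hkodd : Odd (addOrderOf (P + T)) := by
          rcases Nat.even_or_odd (addOrderOf (P + T)) with hke | hko
          · exfalso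
            have h2m : (2 : ℕ) ∣ m := hke.two_dvd.trans hkdvd
            exact (Nat.not_odd_iff_even.mpr (even_iff_two_dvd.mpr h2m)) hmo
          · exact hko
        obtain ⟨u, v, hv, hev, hx'⟩ := odd_case (P + T) _ hPT hkodd
        rw [hxPT] at hx'
        exact nsq2 ⟨(u ^ 2 - W18.a₄) / (2 * v), hx'.symm⟩
    · -- odd order
      obtain ⟨u, v, hv, hev, hx'⟩ := odd_case P hWP hPdef ho
      exact nsq1 ⟨(u ^ 2 - W18.a₄) / (2 * v), hx'.symm⟩
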